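/- Let p be prime, A, B ⊆ {0,...,p−1} with |A| = |B| = k, and write s_A = Σ_μ c_μ x^μ as Schur polynomial. Let α_{B'} denote the substitution x_i ↦ X^{b'_i} for the ascending list of B'. Then in ℤ[X]/Φ_p(X): Σ_{l=1}^{p−1} α_{l·B}(s_A) = m_{A,B}·p − ∏_{i<j}(a_j − a_i)/∏_{i<j}(j − i), where m_{A,B} = Σ_μ c_μ·1(p | Σ_j μ_j b_j). -/

import Mathlib

open Finset MvPolynomial Polynomial

lemma prod_pairs {β : Type*} [CommMonoid β] {k : ℕ} (f : Fin k → Fin k → β) :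
    ∏ q ∈ Finset.univ.filter (fun q : Fin k × Fin k => q.1 < q.2), f q.1 q.2
      = ∏ i, ∏ j ∈ Finset.Ioi i, f i j := by
  rw [Finset.prod_filter, ← Finset.univ_product_univ, Finset.prod_product]
  refine Finset.prod_congr rfl fun i _ => ?_
  rw [← Finset.prod_filter]
  apply Finset.prod_congr _ (fun _ _ => rfl)
  ext j; simp

lemma eval_one_vandermonde {k : ℕ} (a : Fin k → ℕ) (ha : StrictMono a)
    (s : MvPolynomial (Fin k) ℤ)
    (hs : Matrix.det (fun i j : Fin k => (MvPolynomial.X j : MvPolynomial (Fin k) ℤ) ^ a i)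
        = (∏ q ∈ Finset.univ.filter (fun q : Fin k × Fin k => q.1 < q.2),
            (MvPolynomial.X q.2 - MvPolynomial.X q.1)) * s) :
    (∏ i, ∏ j ∈ Finset.Ioi i, ((a j : ℤ) - (a i : ℤ)))
      = (∏ i : Fin k, ∏ j ∈ Finset.Ioi i, ((j : ℤ) - (i : ℤ)))
        * MvPolynomial.eval (fun _ => (1:ℤ)) s := by
  classical
  set ψ : MvPolynomial (Fin k) ℤ →ₐ[ℤ] Polynomial ℤ :=
    MvPolynomial.aeval (fun j : Fin k => (Polynomial.X : Polynomial ℤ) ^ (j : ℕ)) with hψ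
  have key := congrArg ψ hs
  rw [show (Matrix.det (fun i j : Fin k => (MvPolynomial.X j : MvPolynomial (Fin k) ℤ) ^ a i))
      = Matrix.det (fun i j : Fin k => (MvPolynomial.X j : MvPolynomial (Fin k) ℤ) ^ a i) from rfl] at key
  -- map determinant
  have hdet : ψ (Matrix.det (fun i j : Fin k => (MvPolynomial.X j : MvPolynomial (Fin k) ℤ) ^ a i))
      = Matrix.det (Matrix.vandermonde (fun i : Fin k => (Polynomial.X : Polynomial ℤ) ^ a i)) := by
    have := RingHom.map_det ψ.toRingHom
        (fun i j : Fin k => (MvPolynomial.X j : MvPolynomial (Fin k) ℤ) ^ a i)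
    rw [show ψ (Matrix.det fun i j : Fin k => (MvPolynomial.X j : MvPolynomial (Fin k) ℤ) ^ a i)
        = ψ.toRingHom (Matrix.det fun i j : Fin k => (MvPolynomial.X j : MvPolynomial (Fin k) ℤ) ^ a i) from rfl, this]
    congr 1
    funext i j
    change ψ ((MvPolynomial.X j : MvPolynomial (Fin k) ℤ) ^ a i) = _
    simp [Matrix.vandermonde, hψ, ← pow_mul, mul_comm, RingHom.mapMatrix_apply, Matrix.map_apply]
  rw [hdet, Matrix.det_vandermonde, map_mul, map_prod] at key
  simp only [map_sub, hψ, MvPolynomial.aeval_X] at key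
  -- rewrite the filtered product as nested
  rw [prod_pairs (fun i j : Fin k => ((Polynomial.X : Polynomial ℤ) ^ (j:ℕ) - Polynomial.X ^ (i:ℕ)))] at key
  -- factor out (X - 1)
  have factor : ∀ c d : ℕ, c < d → ((Polynomial.X : Polynomial ℤ)^d - Polynomial.X^c)
      = (Polynomial.X^c * ∑ t ∈ range (d - c), Polynomial.X^t) * (Polynomial.X - 1) := by
    intro c d h
    rw [mul_assoc, geom_sum_mul, mul_sub, mul_one, ← pow_add, Nat.add_sub_cancel' h.le]
  have split : ∀ c : Fin k → ℕ, StrictMono c →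
      (∏ i, ∏ j ∈ Finset.Ioi i, ((Polynomial.X : Polynomial ℤ)^(c j) - Polynomial.X^(c i)))
      = (∏ i, ∏ j ∈ Finset.Ioi i,
          ((Polynomial.X : Polynomial ℤ)^(c i) * ∑ t ∈ range (c j - c i), Polynomial.X^t))
        * (Polynomial.X - 1) ^ (∑ i : Fin k, (Finset.Ioi i).card) := by
    intro c hc
    rw [← Finset.prod_pow_eq_pow_sum, ← Finset.prod_mul_distrib]
    refine Finset.prod_congr rfl fun i _ => ?_
    rw [← Finset.prod_const, ← Finset.prod_mul_distrib]
    exact Finset.prod_congr rfl fun j hj => factor _ _ (hc (Finset.mem_Ioi.mp hj))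
  rw [split a ha, split (fun i : Fin k => (i : ℕ)) (fun i j h => h)] at key
  have hX1 : (Polynomial.X - 1 : Polynomial ℤ) ≠ 0 := by
    have := Polynomial.X_sub_C_ne_zero (1:ℤ); rwa [map_one] at this
  have key2 : (∏ i, ∏ j ∈ Finset.Ioi i,
        ((Polynomial.X : Polynomial ℤ)^(a i) * ∑ t ∈ range (a j - a i), Polynomial.X^t))
      = (∏ i : Fin k, ∏ j ∈ Finset.Ioi i,
          ((Polynomial.X : Polynomial ℤ)^(i:ℕ) * ∑ t ∈ range ((j:ℕ) - (i:ℕ)), Polynomial.X^t)) * ψ s := by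
    apply mul_right_cancel₀ (pow_ne_zero (∑ i : Fin k, (Finset.Ioi i).card) hX1)
    rw [key]; ring
  -- evaluate at 1
  have key3 := congrArg (Polynomial.eval (1:ℤ)) key2
  simp only [Polynomial.eval_mul, Polynomial.eval_prod, Polynomial.eval_pow,
    Polynomial.eval_X, Polynomial.eval_geom_sum, one_pow, Finset.sum_const, Finset.card_range,
    nsmul_eq_mul, smul_eq_mul, mul_one, one_mul] at key3
  have heval : Polynomial.eval (1:ℤ) (ψ s) = MvPolynomial.eval (fun _ => (1:ℤ)) s := by
    rw [hψ, MvPolynomial.aeval_def, ← Polynomial.coe_evalRingHom,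
      MvPolynomial.eval₂_comp_left (Polynomial.evalRingHom (1:ℤ))]
    rw [Subsingleton.elim ((Polynomial.evalRingHom (1:ℤ)).comp (algebraMap ℤ (Polynomial ℤ)))
      (RingHom.id ℤ)]
    have hfun : (⇑(Polynomial.evalRingHom (1:ℤ)) ∘ fun j : Fin k => (Polynomial.X : Polynomial ℤ) ^ (j:ℕ))
        = fun _ => (1:ℤ) := by funext j; simp
    rw [hfun]
    rfl
  rw [heval] at key3
  -- convert natural subtraction
  calc (∏ i, ∏ j ∈ Finset.Ioi i, ((a j : ℤ) - (a i : ℤ)))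
      = ∏ i, ∏ j ∈ Finset.Ioi i, (((a j - a i : ℕ) : ℤ)) := by
        refine Finset.prod_congr rfl fun i _ => Finset.prod_congr rfl fun j hj => ?_
        rw [Nat.cast_sub (ha (Finset.mem_Ioi.mp hj)).le]
    _ = (∏ i : Fin k, ∏ j ∈ Finset.Ioi i, (((j:ℕ) - (i:ℕ) : ℕ) : ℤ))
          * MvPolynomial.eval (fun _ => (1:ℤ)) s := key3
    _ = (∏ i : Fin k, ∏ j ∈ Finset.Ioi i, ((j : ℤ) - (i : ℤ)))
          * MvPolynomial.eval (fun _ => (1:ℤ)) s := by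
        congr 1
        refine Finset.prod_congr rfl fun i _ => Finset.prod_congr rfl fun j hj => ?_
        rw [Nat.cast_sub (Finset.mem_Ioi.mp hj : i < j).le]

theorem sum_conjugated_schur_substitutions
    (p : ℕ) (hp : p.Prime)
    (k : ℕ) (a b : Fin k → ℕ)
    (ha : StrictMono a) (hb : StrictMono b)
    (hap : ∀ i, a i < p) (hbp : ∀ i, b i < p)
    (s : MvPolynomial (Fin k) ℤ)
    (hs : Matrix.det (fun i j : Fin k => (MvPolynomial.X j : MvPolynomial (Fin k) ℤ) ^ a i)
        = (∏ q ∈ Finset.univ.filter (fun q : Fin k × Fin k => q.1 < q.2),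
            (MvPolynomial.X q.2 - MvPolynomial.X q.1)) * s)
    (m : ℤ)
    (hm : m = ∑ μ ∈ s.support,
        s.coeff μ * (if (p : ℤ) ∣ (∑ j : Fin k, (μ j : ℤ) * (b j : ℤ)) then 1 else 0))
    (N : ℤ)
    (hN : N * (∏ q ∈ Finset.univ.filter (fun q : Fin k × Fin k => q.1 < q.2),
            ((q.2 : ℤ) - (q.1 : ℤ)))
        = ∏ q ∈ Finset.univ.filter (fun q : Fin k × Fin k => q.1 < q.2),
            ((a q.2 : ℤ) - (a q.1 : ℤ))) :
    (∑ i ∈ Finset.range p, (Polynomial.X : Polynomial ℤ) ^ i)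
      ∣ ((∑ l ∈ Finset.Icc 1 (p - 1),
            MvPolynomial.aeval
              (fun j : Fin k => (Polynomial.X : Polynomial ℤ) ^ ((l * b j) % p)) s)
          - Polynomial.C (m * p - N)) := by
  classical
  have hp1 : 1 < p := hp.one_lt
  -- Step 1: eval of s at all-ones equals N
  have hevalN : MvPolynomial.eval (fun _ => (1:ℤ)) s = N := by
    have h1 := eval_one_vandermonde a ha s hs
    rw [prod_pairs (fun i j : Fin k => ((j:ℤ) - (i:ℤ))),
        prod_pairs (fun i j : Fin k => ((a j : ℤ) - (a i : ℤ)))] at hN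
    have hP : (∏ i : Fin k, ∏ j ∈ Finset.Ioi i, ((j : ℤ) - (i : ℤ))) ≠ 0 := by
      apply Finset.prod_ne_zero_iff.mpr
      intro i _
      apply Finset.prod_ne_zero_iff.mpr
      intro j hj
      have hij : i < j := Finset.mem_Ioi.mp hj
      have hij2 : (i : ℕ) < (j : ℕ) := hij
      omega
    apply mul_left_cancel₀ hP
    rw [← h1, ← hN]
    exact mul_comm _ _
  -- Step 2: quotient ring setup
  set Φ : Polynomial ℤ := ∑ i ∈ Finset.range p, (Polynomial.X : Polynomial ℤ) ^ i with hΦdef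
  set I : Ideal (Polynomial ℤ) := Ideal.span {Φ} with hIdef
  rw [← Ideal.mem_span_singleton (α := Polynomial ℤ), ← hIdef,
      ← Ideal.Quotient.eq_zero_iff_mem]
  set Q := Polynomial ℤ ⧸ I
  set π : Polynomial ℤ →+* Q := Ideal.Quotient.mk I with hπdef
  set x : Q := π Polynomial.X with hxdef
  have hΦ0 : π Φ = 0 :=
    Ideal.Quotient.eq_zero_iff_mem.mpr (Ideal.subset_span (Set.mem_singleton Φ))
  have hsum0 : (∑ i ∈ Finset.range p, x ^ i) = 0 := by
    have h := hΦ0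
    rw [hΦdef, map_sum] at h
    simpa only [map_pow] using h
  have hxp : x ^ p = 1 := by
    have hg : Φ * (Polynomial.X - 1) = Polynomial.X ^ p - 1 := geom_sum_mul _ p
    have := congrArg π hg
    rw [map_mul, hΦ0, zero_mul, map_sub, map_pow, map_one] at this
    rw [← hxdef] at this
    have := this.symm
    rwa [sub_eq_zero] at this
  have hxmod : ∀ n : ℕ, x ^ n = x ^ (n % p) := by
    intro n
    conv_lhs => rw [← Nat.div_add_mod n p]
    rw [pow_add, pow_mul, hxp, one_pow, one_mul]
  -- Step 3: image of each substitution
  have hπaeval : ∀ l : ℕ,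
      π (MvPolynomial.aeval
          (fun j : Fin k => (Polynomial.X : Polynomial ℤ) ^ ((l * b j) % p)) s)
        = ∑ μ ∈ s.support, ((s.coeff μ : ℤ) : Q)
            * x ^ ((l * ∑ j : Fin k, μ j * b j) % p) := by
    intro l
    rw [MvPolynomial.aeval_def, MvPolynomial.eval₂_comp_left π,
        Subsingleton.elim (π.comp (algebraMap ℤ (Polynomial ℤ))) (Int.castRingHom Q),
        MvPolynomial.eval₂_eq']
    refine Finset.sum_congr rfl fun μ _ => ?_
    congr 1
    have : ∀ j : Fin k, (π ∘ fun j : Fin k =>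
        (Polynomial.X : Polynomial ℤ) ^ ((l * b j) % p)) j ^ μ j
        = x ^ (((l * b j) % p) * μ j) := by
      intro j
      simp only [Function.comp_apply, map_pow, ← hxdef, ← pow_mul]
    rw [Finset.prod_congr rfl (fun j _ => this j), Finset.prod_pow_eq_pow_sum]
    rw [hxmod (∑ j : Fin k, (l * b j) % p * μ j)]
    congr 1
    rw [Finset.sum_nat_mod]
    have h2 : ∀ j : Fin k, ((l * b j) % p * μ j) % p = (l * (μ j * b j)) % p := by
      intro j
      rw [Nat.mod_mul_mod]
      congr 1
      ring
    rw [Finset.sum_congr rfl (fun j hj => h2 j), ← Finset.sum_nat_mod, ← Finset.mul_sum]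
  -- Step 4: inner sums
  have hrange : Finset.range p = insert 0 (Finset.Icc 1 (p-1)) := by
    ext n
    simp only [Finset.mem_range, Finset.mem_insert, Finset.mem_Icc]
    omega
  have h0notin : (0:ℕ) ∉ Finset.Icc 1 (p-1) := by simp
  have inner : ∀ S : ℕ, (∑ l ∈ Finset.Icc 1 (p-1), x ^ ((l * S) % p))
      = (((if p ∣ S then (p:ℤ) - 1 else -1) : ℤ) : Q) := by
    intro S
    by_cases hdvd : p ∣ S
    · obtain ⟨c, rfl⟩ := hdvd
      have hz : ∀ l : ℕ, (l * (p * c)) % p = 0 := by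
        intro l
        have h1 : l * (p * c) = p * (l * c) := by ring
        rw [h1, Nat.mul_mod_right]
      rw [if_pos (Dvd.intro c rfl)]
      calc (∑ l ∈ Finset.Icc 1 (p-1), x ^ ((l * (p * c)) % p))
          = ∑ l ∈ Finset.Icc 1 (p-1), (1:Q) := by
            refine Finset.sum_congr rfl fun l _ => ?_
            rw [hz l, pow_zero]
        _ = ((p - 1 : ℕ) : Q) := by
            rw [Finset.sum_const, Nat.card_Icc, nsmul_eq_mul, mul_one]
            norm_num
        _ = (((p:ℤ) - 1 : ℤ) : Q) := by
            push_cast [Nat.cast_sub hp1.le]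
            ring
    · rw [if_neg hdvd]
      obtain ⟨T, -, hT⟩ := Nat.exists_mul_mod_eq_one_of_coprime
        ((hp.coprime_iff_not_dvd.mpr hdvd).symm) hp1
      have hmem : ∀ n : ℕ, (n * S) % p ∈ Finset.range p :=
        fun n => Finset.mem_range.mpr (Nat.mod_lt _ (by omega))
      have hmemT : ∀ n : ℕ, (n * T) % p ∈ Finset.range p :=
        fun n => Finset.mem_range.mpr (Nat.mod_lt _ (by omega))
      have hinv1 : ∀ l ∈ Finset.range p, ((l * S) % p * T) % p = l := by
        intro l hl
        rw [Nat.mod_mul_mod, mul_assoc, Nat.mul_mod, hT, mul_one, Nat.mod_mod_of_dvd,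
          Nat.mod_eq_of_lt (Finset.mem_range.mp hl)]
        exact dvd_refl p
      have hinv2 : ∀ t ∈ Finset.range p, ((t * T) % p * S) % p = t := by
        intro t ht
        rw [Nat.mod_mul_mod, mul_assoc, Nat.mul_mod, mul_comm T S, hT, mul_one,
          Nat.mod_mod_of_dvd, Nat.mod_eq_of_lt (Finset.mem_range.mp ht)]
        exact dvd_refl p
      have hbij : (∑ l ∈ Finset.range p, x ^ ((l * S) % p)) = ∑ t ∈ Finset.range p, x ^ t :=
        Finset.sum_nbij' (fun l => (l * S) % p) (fun t => (t * T) % p)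
          (fun l _ => hmem l) (fun t _ => hmemT t) hinv1 hinv2 (fun l _ => rfl)
      have hsplit : (∑ l ∈ Finset.range p, x ^ ((l * S) % p))
          = x ^ ((0 * S) % p) + ∑ l ∈ Finset.Icc 1 (p-1), x ^ ((l * S) % p) := by
        rw [hrange, Finset.sum_insert h0notin]
      rw [hbij, hsum0] at hsplit
      have : (0 * S) % p = 0 := by simp
      rw [this, pow_zero] at hsplit
      have := hsplit.symm
      push_cast
      linear_combination this
  -- Step 5: assemble
  rw [map_sub, map_sum]
  have hC : π (Polynomial.C (m * ↑p - N)) = ((m * (p:ℤ) - N : ℤ) : Q) := by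
    rw [show Polynomial.C (m * (p:ℤ) - N) = ((m * (p:ℤ) - N : ℤ) : Polynomial ℤ) from by
      simp [Polynomial.C_eq_intCast]]
    exact map_intCast π _
  rw [hC]
  rw [Finset.sum_congr rfl (fun l _ => hπaeval l), Finset.sum_comm]
  have hswap : (∑ μ ∈ s.support, ∑ l ∈ Finset.Icc 1 (p-1),
      ((s.coeff μ : ℤ) : Q) * x ^ ((l * ∑ j : Fin k, μ j * b j) % p))
      = ∑ μ ∈ s.support, ((s.coeff μ : ℤ) : Q)
          * (((if p ∣ (∑ j : Fin k, μ j * b j) then (p:ℤ) - 1 else -1) : ℤ) : Q) := by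
    refine Finset.sum_congr rfl fun μ _ => ?_
    rw [← Finset.mul_sum, inner]
  rw [hswap]
  -- reduce to an integer identity
  have hint : (∑ μ ∈ s.support,
      (s.coeff μ) * (if p ∣ (∑ j : Fin k, μ j * b j) then (p:ℤ) - 1 else -1))
      = m * p - N := by
    rw [← hevalN, MvPolynomial.eval_eq]
    simp only [one_pow, Finset.prod_const_one, mul_one]
    rw [hm, Finset.sum_mul, ← Finset.sum_sub_distrib]
    refine Finset.sum_congr rfl fun μ _ => ?_
    have hiff : ((p:ℤ) ∣ (∑ j : Fin k, (μ j : ℤ) * (b j : ℤ)))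
        ↔ (p ∣ (∑ j : Fin k, μ j * b j)) := by
      rw [show (∑ j : Fin k, (μ j : ℤ) * (b j : ℤ)) = ((∑ j : Fin k, μ j * b j : ℕ) : ℤ) by
        push_cast; ring]
      exact Int.natCast_dvd_natCast
    by_cases hd : p ∣ (∑ j : Fin k, μ j * b j)
    · rw [if_pos hd, if_pos (hiff.mpr hd)]; ring
    · rw [if_neg hd, if_neg (fun h => hd (hiff.mp h))]; ring
  calc (∑ μ ∈ s.support, ((s.coeff μ : ℤ) : Q)
        * (((if p ∣ (∑ j : Fin k, μ j * b j) then (p:ℤ) - 1 else -1) : ℤ) : Q))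
        - ((m * (p:ℤ) - N : ℤ) : Q)
      = ((∑ μ ∈ s.support,
          (s.coeff μ) * (if p ∣ (∑ j : Fin k, μ j * b j) then (p:ℤ) - 1 else -1) : ℤ) : Q)
        - ((m * (p:ℤ) - N : ℤ) : Q) := by
        rw [Int.cast_sum]
        congr 1
        exact Finset.sum_congr rfl fun μ _ => (Int.cast_mul _ _).symm
    _ = 0 := by rw [hint]; ring
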